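/- Every strongly regular frame admits a compactification: if L is a frame such that every a ∈ L satisfies a = sSup {b | b ≺₀ a}, where ≺₀ is the greatest interpolative relation contained in the well-inside relation ≺ of L, then there exist a compact regular frame M and a dense surjective frame homomorphism k : M → L. -/

import Mathlib

/-- The well-inside relation of a frame: `b` is well inside `a` iff `bᶜ ⊔ a = ⊤`. -/
def WellInside {L : Type*} [Order.Frame L] (b a : L) : Prop := bᶜ ⊔ a = ⊤

/-- A frame is regular if every element is the join of the elements well inside it. -/
def IsRegularFrame (L : Type*) [Order.Frame L] : Prop :=
  ∀ a : L, a = sSup {b | WellInside b a}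

/-- A frame is compact if `⊤` is a compact element. -/
def IsCompactFrame (L : Type*) [Order.Frame L] : Prop :=
  ∀ S : Set L, ⊤ ≤ sSup S → ∃ T : Set L, T ⊆ S ∧ T.Finite ∧ ⊤ ≤ sSup T

/-- A binary relation `r` is interpolative if `r x y` implies there is `z`
with `r x z` and `r z y`. -/
def Interpolative {A : Type*} (r : A → A → Prop) : Prop :=
  ∀ x y, r x y → ∃ z, r x z ∧ r z y

/-- The greatest interpolative relation contained in `r`: the union of all
interpolative relations contained in `r`. -/
def gis {A : Type*} (r : A → A → Prop) : A → A → Prop :=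
  fun x y => ∃ s : A → A → Prop,
    (∀ a b, s a b → r a b) ∧ Interpolative s ∧ s x y

namespace SRC
variable {α : Type*} [Order.Frame α]

theorem wellInside_le {b a : α} (h : WellInside b a) : b ≤ a := by
  have hb : b = b ⊓ bᶜ ⊔ b ⊓ a := by
    rw [← inf_sup_left, h, inf_top_eq]
  rw [hb]
  simp [inf_compl_self]

theorem wellInside_mono {b' b a a' : α} (hb : b' ≤ b) (h : WellInside b a) (ha : a ≤ a') :
    WellInside b' a' :=
  top_unique (h.ge.trans (sup_le_sup (compl_le_compl hb) ha))

theorem wellInside_sup {u v u' v' : α} (h : WellInside u v) (h' : WellInside u' v') :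
    WellInside (u ⊔ u') (v ⊔ v') := by
  unfold WellInside at *
  rw [compl_sup, sup_inf_right]
  apply top_unique
  refine le_inf (h.ge.trans ?_) (h'.ge.trans ?_)
  · exact sup_le_sup_left le_sup_left _
  · exact sup_le_sup_left le_sup_right _

theorem wellInside_inf {u v u' v' : α} (h : WellInside u v) (h' : WellInside u' v') :
    WellInside (u ⊓ u') (v ⊓ v') := by
  unfold WellInside at *
  apply top_unique
  have h1 : uᶜ ≤ (u ⊓ u')ᶜ := compl_anti inf_le_left
  have h2 : u'ᶜ ≤ (u ⊓ u')ᶜ := compl_anti inf_le_right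
  calc (⊤ : α) = (uᶜ ⊔ v) ⊓ (u'ᶜ ⊔ v') := by rw [h, h', inf_top_eq]
  _ ≤ ((u ⊓ u')ᶜ ⊔ v) ⊓ ((u ⊓ u')ᶜ ⊔ v') :=
      inf_le_inf (sup_le_sup_right h1 v) (sup_le_sup_right h2 v')
  _ = (u ⊓ u')ᶜ ⊔ (v ⊓ v') := (sup_inf_left _ _ _).symm

theorem wellInside_compl {u v : α} (h : WellInside u v) : WellInside vᶜ uᶜ :=
  top_unique <| by
    calc (⊤ : α) = uᶜ ⊔ v := h.symm
    _ ≤ vᶜᶜ ⊔ uᶜ := by rw [sup_comm]; exact sup_le_sup le_compl_compl le_rfl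

theorem gis_sub {A : Type*} {r : A → A → Prop} {x y : A} (h : gis r x y) : r x y :=
  let ⟨s, hs, _, hxy⟩ := h; hs _ _ hxy

theorem gis_interp {A : Type*} {r : A → A → Prop} {x y : A} (h : gis r x y) :
    ∃ z, gis r x z ∧ gis r z y := by
  obtain ⟨s, hsr, hsi, hxy⟩ := h
  obtain ⟨z, h1, h2⟩ := hsi x y hxy
  exact ⟨z, ⟨s, hsr, hsi, h1⟩, ⟨s, hsr, hsi, h2⟩⟩

theorem R_le {b a : α} (h : gis WellInside b a) : b ≤ a := wellInside_le (gis_sub h)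

theorem R_mono {b' b a a' : α} (hb : b' ≤ b) (h : gis WellInside b a) (ha : a ≤ a') :
    gis WellInside b' a' := by
  obtain ⟨s, hsr, hsi, hxy⟩ := h
  refine ⟨fun x y => ∃ u v, x ≤ u ∧ s u v ∧ v ≤ y, ?_, ?_, b, a, hb, hxy, ha⟩
  · rintro x y ⟨u, v, hxu, huv, hvy⟩
    exact wellInside_mono hxu (hsr _ _ huv) hvy
  · rintro x y ⟨u, v, hxu, huv, hvy⟩
    obtain ⟨z, h1, h2⟩ := hsi _ _ huv
    exact ⟨z, ⟨u, z, hxu, h1, le_rfl⟩, ⟨z, v, le_rfl, h2, hvy⟩⟩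

theorem R_bot (y : α) : gis WellInside (⊥ : α) y := by
  refine ⟨fun x _ => x = ⊥, ?_, ?_, rfl⟩
  · rintro x y rfl
    unfold WellInside
    rw [compl_bot, top_sup_eq]
  · rintro x y rfl
    exact ⟨⊥, rfl, rfl⟩

theorem R_top (x : α) : gis WellInside x (⊤ : α) := by
  refine ⟨fun _ y => y = ⊤, ?_, ?_, rfl⟩
  · rintro a b rfl
    unfold WellInside
    rw [sup_top_eq]
  · rintro a b rfl
    exact ⟨⊤, rfl, rfl⟩

theorem R_sup {b a b' a' : α} (h : gis WellInside b a) (h' : gis WellInside b' a') :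
    gis WellInside (b ⊔ b') (a ⊔ a') := by
  obtain ⟨s, hsr, hsi, hs⟩ := h
  obtain ⟨s', hsr', hsi', hs'⟩ := h'
  refine ⟨fun x y => ∃ u v u' v', x ≤ u ⊔ u' ∧ s u v ∧ s' u' v' ∧ v ⊔ v' ≤ y, ?_, ?_,
    b, a, b', a', le_rfl, hs, hs', le_rfl⟩
  · rintro x y ⟨u, v, u', v', hx, huv, huv', hy⟩
    exact wellInside_mono hx (wellInside_sup (hsr _ _ huv) (hsr' _ _ huv')) hy
  · rintro x y ⟨u, v, u', v', hx, huv, huv', hy⟩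
    obtain ⟨w, h1, h2⟩ := hsi _ _ huv
    obtain ⟨w', h1', h2'⟩ := hsi' _ _ huv'
    exact ⟨w ⊔ w', ⟨u, w, u', w', hx, h1, h1', le_rfl⟩, ⟨w, v, w', v', le_rfl, h2, h2', hy⟩⟩

theorem R_inf {b a b' a' : α} (h : gis WellInside b a) (h' : gis WellInside b' a') :
    gis WellInside (b ⊓ b') (a ⊓ a') := by
  obtain ⟨s, hsr, hsi, hs⟩ := h
  obtain ⟨s', hsr', hsi', hs'⟩ := h'
  refine ⟨fun x y => ∃ u v u' v', x ≤ u ⊓ u' ∧ s u v ∧ s' u' v' ∧ v ⊓ v' ≤ y, ?_, ?_,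
    b, a, b', a', le_rfl, hs, hs', le_rfl⟩
  · rintro x y ⟨u, v, u', v', hx, huv, huv', hy⟩
    exact wellInside_mono hx (wellInside_inf (hsr _ _ huv) (hsr' _ _ huv')) hy
  · rintro x y ⟨u, v, u', v', hx, huv, huv', hy⟩
    obtain ⟨w, h1, h2⟩ := hsi _ _ huv
    obtain ⟨w', h1', h2'⟩ := hsi' _ _ huv'
    exact ⟨w ⊓ w', ⟨u, w, u', w', hx, h1, h1', le_rfl⟩, ⟨w, v, w', v', le_rfl, h2, h2', hy⟩⟩

theorem R_compl {a b : α} (h : gis WellInside a b) : gis WellInside bᶜ aᶜ := by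
  obtain ⟨s, hsr, hsi, hab⟩ := h
  refine ⟨fun x y => s x y ∨ ∃ u v, s u v ∧ x ≤ vᶜ ∧ uᶜ ≤ y, ?_, ?_,
    Or.inr ⟨a, b, hab, le_rfl, le_rfl⟩⟩
  · rintro x y (hxy | ⟨u, v, huv, hx, hy⟩)
    · exact hsr _ _ hxy
    · exact wellInside_mono hx (wellInside_compl (hsr _ _ huv)) hy
  · rintro x y (hxy | ⟨u, v, huv, hx, hy⟩)
    · obtain ⟨z, h1, h2⟩ := hsi _ _ hxy
      exact ⟨z, Or.inl h1, Or.inl h2⟩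
    · obtain ⟨w, h1, h2⟩ := hsi _ _ huv
      exact ⟨wᶜ, Or.inr ⟨w, v, h2, hx, le_rfl⟩, Or.inr ⟨u, w, h1, le_rfl, hy⟩⟩


structure RIdeal (L : Type*) [Order.Frame L] where
  carrier : Set L
  bot_mem' : ⊥ ∈ carrier
  down' : ∀ {x y : L}, x ≤ y → y ∈ carrier → x ∈ carrier
  sup_mem' : ∀ {x y : L}, x ∈ carrier → y ∈ carrier → x ⊔ y ∈ carrier
  round' : ∀ x ∈ carrier, ∃ y ∈ carrier, gis WellInside x y

namespace RIdeal

instance : SetLike (RIdeal α) α where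
  coe := RIdeal.carrier
  coe_injective := by rintro ⟨⟩ ⟨⟩ h; congr

instance : PartialOrder (RIdeal α) := .ofSetLike (RIdeal α) α

theorem bot_mem (J : RIdeal α) : ⊥ ∈ J := J.bot_mem'
theorem down (J : RIdeal α) {x y : α} (h : x ≤ y) (hy : y ∈ J) : x ∈ J := J.down' h hy
theorem sup_mem (J : RIdeal α) {x y : α} (hx : x ∈ J) (hy : y ∈ J) : x ⊔ y ∈ J :=
  J.sup_mem' hx hy
theorem round (J : RIdeal α) {x : α} (hx : x ∈ J) : ∃ y ∈ J, gis WellInside x y :=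
  J.round' x hx

theorem finsupMem (J : RIdeal α) : ∀ F : Finset α, ↑F ⊆ (J : Set α) → F.sup id ∈ J := by
  classical
  intro F
  induction F using Finset.induction_on with
  | empty => intro _; simpa using J.bot_mem
  | @insert a G ha ih =>
    intro hsub
    rw [Finset.sup_insert]
    exact J.sup_mem (hsub (by simp)) (ih fun x hx => hsub (by simp [hx]))

theorem finsetRound {U : Set α} (hU : ∀ b ∈ U, ∃ c ∈ U, gis WellInside b c) :
    ∀ F : Finset α, ↑F ⊆ U → ∃ G : Finset α, ↑G ⊆ U ∧
      gis WellInside (F.sup id) (G.sup id) := by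
  classical
  intro F
  induction F using Finset.induction_on with
  | empty => intro _; exact ⟨∅, by simp, by simpa using R_bot _⟩
  | @insert a G ha ih =>
    intro hsub
    obtain ⟨c, hcU, hRc⟩ := hU a (hsub (by simp))
    obtain ⟨G', hG'U, hRG⟩ := ih fun x hx => hsub (by simp [hx])
    refine ⟨insert c G', ?_, ?_⟩
    · intro x hx
      rcases Finset.mem_insert.1 (by exact_mod_cast hx) with rfl | hx
      · exact hcU
      · exact hG'U hx
    · rw [Finset.sup_insert, Finset.sup_insert]
      exact R_sup hRc hRG

def genIdeal (U : Set α) (hU : ∀ b ∈ U, ∃ c ∈ U, gis WellInside b c) : RIdeal α where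
  carrier := {x | ∃ F : Finset α, ↑F ⊆ U ∧ x ≤ F.sup id}
  bot_mem' := ⟨∅, by simp⟩
  down' := fun hxy ⟨F, hF, hy⟩ => ⟨F, hF, hxy.trans hy⟩
  sup_mem' := by
    classical
    rintro x y ⟨F, hF, hx⟩ ⟨G, hG, hy⟩
    refine ⟨F ∪ G, by simp [Set.union_subset_iff, hF, hG, Finset.coe_union], ?_⟩
    rw [Finset.sup_union]
    exact sup_le (hx.trans le_sup_left) (hy.trans le_sup_right)
  round' := by
    rintro x ⟨F, hF, hx⟩
    obtain ⟨G, hGU, hRG⟩ := finsetRound hU F hF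
    exact ⟨G.sup id, ⟨G, hGU, le_rfl⟩, R_mono hx hRG le_rfl⟩

theorem subset_genIdeal {U : Set α} {hU} : U ⊆ ↑(genIdeal U hU) := fun x hx =>
  ⟨{x}, by simpa using hx, by simp⟩

theorem genIdeal_le {U : Set α} {hU} {K : RIdeal α} (h : U ⊆ ↑K) :
    ∀ x ∈ genIdeal U hU, x ∈ K := by
  rintro x ⟨F, hF, hx⟩
  exact K.down hx (K.finsupMem F (hF.trans h))

theorem iUnion_round (S : Set (RIdeal α)) :
    ∀ b ∈ ⋃ J ∈ S, (J : Set α), ∃ c ∈ ⋃ J ∈ S, (J : Set α), gis WellInside b c := by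
  intro b hb
  simp only [Set.mem_iUnion] at hb ⊢
  obtain ⟨J, hJ, hbJ⟩ := hb
  obtain ⟨c, hcJ, hR⟩ := J.round hbJ
  exact ⟨c, ⟨J, hJ, hcJ⟩, hR⟩

instance : SupSet (RIdeal α) where
  sSup S := genIdeal (⋃ J ∈ S, (J : Set α)) (iUnion_round S)

theorem mem_sSup_of_mem {S : Set (RIdeal α)} {J : RIdeal α} (hJ : J ∈ S) {x : α}
    (hx : x ∈ J) : x ∈ sSup S :=
  subset_genIdeal (Set.mem_iUnion₂.2 ⟨J, hJ, hx⟩)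

theorem mem_sSup {S : Set (RIdeal α)} {x : α} :
    x ∈ sSup S ↔ ∃ F : Finset α, ↑F ⊆ (⋃ J ∈ S, (J : Set α)) ∧ x ≤ F.sup id :=
  Iff.rfl

instance : CompleteLattice (RIdeal α) :=
  completeLatticeOfSup _ fun S => by
    constructor
    · intro J hJ
      refine SetLike.le_def.2 fun x hx => ?_
      exact mem_sSup_of_mem hJ hx
    · intro K hK
      refine SetLike.le_def.2 fun x hx => ?_
      exact genIdeal_le (Set.iUnion₂_subset fun J hJ => SetLike.le_def.1 (hK hJ)) x hx

def interIdeal (J K : RIdeal α) : RIdeal α where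
  carrier := ↑J ∩ ↑K
  bot_mem' := ⟨J.bot_mem, K.bot_mem⟩
  down' := fun hxy hy => ⟨J.down hxy hy.1, K.down hxy hy.2⟩
  sup_mem' := fun hx hy => ⟨J.sup_mem hx.1 hy.1, K.sup_mem hx.2 hy.2⟩
  round' := by
    rintro x ⟨hxJ, hxK⟩
    obtain ⟨y, hyJ, hRy⟩ := J.round hxJ
    obtain ⟨z, hzK, hRz⟩ := K.round hxK
    refine ⟨y ⊓ z, ⟨J.down inf_le_left hyJ, K.down inf_le_right hzK⟩, ?_⟩
    have := R_inf hRy hRz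
    rwa [inf_idem] at this

theorem inf_eq_inter (J K : RIdeal α) : J ⊓ K = interIdeal J K := by
  refine le_antisymm (SetLike.le_def.2 fun x hx => ?_)
    (le_inf (SetLike.le_def.2 fun x (hx : x ∈ interIdeal J K) => hx.1)
      (SetLike.le_def.2 fun x (hx : x ∈ interIdeal J K) => hx.2))
  exact ⟨SetLike.le_def.1 (inf_le_left (a := J) (b := K)) hx,
    SetLike.le_def.1 (inf_le_right (a := J) (b := K)) hx⟩

theorem mem_inf {J K : RIdeal α} {x : α} : x ∈ J ⊓ K ↔ x ∈ J ∧ x ∈ K := by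
  rw [inf_eq_inter]; exact Iff.rfl

instance : Order.Frame (RIdeal α) :=
  Order.Frame.ofMinimalAxioms
    { inf_sSup_le_iSup_inf := by
        classical
        intro J S
        refine SetLike.le_def.2 fun x hx => ?_
        rw [mem_inf] at hx
        obtain ⟨hxJ, F, hF, hxle⟩ := hx
        rw [← sSup_image]
        refine mem_sSup.2 ⟨F.image (fun b => x ⊓ b), ?_, ?_⟩
        · intro y hy
          simp only [Finset.coe_image, Set.mem_image] at hy
          obtain ⟨b, hbF, rfl⟩ := hy
          have hb := hF hbF
          simp only [Set.mem_iUnion] at hb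
          obtain ⟨K, hKS, hbK⟩ := hb
          refine Set.mem_iUnion₂.2 ⟨J ⊓ K, Set.mem_image_of_mem _ hKS, ?_⟩
          exact mem_inf.2 ⟨J.down inf_le_left hxJ, K.down inf_le_right hbK⟩
        · rw [Finset.sup_image]
          calc x = x ⊓ F.sup id := (inf_eq_left.2 hxle).symm
          _ ≤ F.sup ((x ⊓ ·) ∘ id) := by
              rw [Finset.sup_inf_distrib_left]
              exact le_rfl }

def univIdeal : RIdeal α where
  carrier := Set.univ
  bot_mem' := trivial
  down' := fun _ _ => trivial
  sup_mem' := fun _ _ => trivial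
  round' := fun x _ => ⟨⊤, trivial, R_top x⟩

theorem top_eq_univ : (⊤ : RIdeal α) = univIdeal :=
  le_antisymm (SetLike.le_def.2 fun _ _ => trivial) le_top

theorem mem_top (x : α) : x ∈ (⊤ : RIdeal α) := by
  rw [top_eq_univ]; trivial

def botIdeal : RIdeal α where
  carrier := {x | x ≤ ⊥}
  bot_mem' := le_rfl
  down' := fun hxy hy => hxy.trans hy
  sup_mem' := fun hx hy => sup_le hx hy
  round' := fun x hx => ⟨⊥, le_rfl, by
    have : x = ⊥ := le_bot_iff.1 hx
    rw [this]; exact R_bot ⊥⟩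

theorem botIdeal_le (J : RIdeal α) : botIdeal ≤ J :=
  SetLike.le_def.2 fun x hx => J.down hx J.bot_mem

theorem bot_eq : (⊥ : RIdeal α) = botIdeal :=
  le_antisymm bot_le (botIdeal_le _)

theorem mem_sup_of_mems {I K : RIdeal α} {u v : α} (hu : u ∈ I) (hv : v ∈ K) :
    u ⊔ v ∈ I ⊔ K :=
  (I ⊔ K).sup_mem (SetLike.le_def.1 (le_sup_left (a := I) (b := K)) hu)
    (SetLike.le_def.1 (le_sup_right (a := I) (b := K)) hv)

theorem eq_top_of_top_mem {J : RIdeal α} (h : ⊤ ∈ J) : J = ⊤ :=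
  le_antisymm le_top (SetLike.le_def.2 fun x _ => J.down le_top h)

/-- The round ideal of elements `≺₀`-below `a`. -/
def dIdeal (a : α) : RIdeal α where
  carrier := {x | gis WellInside x a}
  bot_mem' := R_bot a
  down' := fun hxy hy => R_mono hxy hy le_rfl
  sup_mem' := fun hx hy => by
    have := R_sup hx hy
    rwa [sup_idem] at this
  round' := fun x hx => by
    obtain ⟨z, h1, h2⟩ := gis_interp hx
    exact ⟨z, h2, h1⟩

theorem mem_dIdeal {a x : α} : x ∈ dIdeal a ↔ gis WellInside x a := Iff.rfl

/-- The compactification map. -/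
def kFun (J : RIdeal α) : α := sSup (J : Set α)

theorem kFun_inf (J K : RIdeal α) : kFun (J ⊓ K) = kFun J ⊓ kFun K := by
  rw [inf_eq_inter]
  apply le_antisymm
  · exact sSup_le fun x hx => le_inf (le_sSup hx.1) (le_sSup hx.2)
  · unfold kFun
    rw [sSup_inf_sSup]
    refine iSup₂_le fun p hp => ?_
    exact le_sSup ⟨J.down inf_le_left hp.1, K.down inf_le_right hp.2⟩

theorem kFun_top : kFun (⊤ : RIdeal α) = ⊤ := by
  rw [top_eq_univ]
  exact top_unique (le_sSup trivial)

theorem kFun_sSup (S : Set (RIdeal α)) : kFun (sSup S) = sSup (kFun '' S) := by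
  have h1 : kFun (sSup S) = sSup (⋃ J ∈ S, (J : Set α)) := by
    apply le_antisymm
    · refine sSup_le fun x hx => ?_
      obtain ⟨F, hF, hxle⟩ := mem_sSup.1 hx
      exact hxle.trans (Finset.sup_le fun b hb => le_sSup (hF hb))
    · exact sSup_le fun x hx => le_sSup (mem_sSup.2 ⟨{x}, by simpa using hx, by simp⟩)
  rw [h1]
  apply le_antisymm
  · refine sSup_le fun x hx => ?_
    simp only [Set.mem_iUnion] at hx
    obtain ⟨J, hJ, hxJ⟩ := hx
    exact (le_sSup hxJ).trans (le_sSup (Set.mem_image_of_mem _ hJ))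
  · refine sSup_le ?_
    rintro _ ⟨J, hJ, rfl⟩
    exact sSup_le fun y hy => le_sSup (Set.mem_iUnion₂.2 ⟨J, hJ, hy⟩)

theorem isCompact : IsCompactFrame (RIdeal α) := by
  classical
  intro S hS
  have htop : ⊤ ∈ sSup S := SetLike.le_def.1 hS (mem_top ⊤)
  obtain ⟨F, hF, hle⟩ := mem_sSup.1 htop
  have hch : ∀ b ∈ F, ∃ J, J ∈ S ∧ b ∈ J := by
    intro b hb
    have hb' := hF hb
    simp only [Set.mem_iUnion] at hb'
    obtain ⟨J, hJ, hbJ⟩ := hb'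
    exact ⟨J, hJ, hbJ⟩
  choose f hfS hfm using hch
  refine ⟨↑(F.attach.image fun b => f b.1 b.2), ?_, Finset.finite_toSet _, ?_⟩
  · intro J hJ
    simp only [Finset.coe_image, Set.mem_image] at hJ
    obtain ⟨b, _, rfl⟩ := hJ
    exact hfS _ _
  · have htopT : ⊤ ∈ sSup (↑(F.attach.image fun b => f b.1 b.2) : Set (RIdeal α)) := by
      refine mem_sSup.2 ⟨F, ?_, hle⟩
      intro b hb
      have hbF : b ∈ F := by exact_mod_cast hb
      refine Set.mem_iUnion₂.2 ⟨f b hbF, ?_, hfm b hbF⟩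
      simp only [Finset.coe_image, Set.mem_image, Finset.mem_coe]
      exact ⟨⟨b, hbF⟩, by simp, rfl⟩
    refine SetLike.le_def.2 fun x _ => ?_
    exact RIdeal.down _ le_top htopT

theorem wellInside_of' {K J N : RIdeal α} (hd : N ⊓ K = ⊥) (hc : N ⊔ J = ⊤) :
    WellInside K J := by
  have h1 : N ≤ Kᶜ := le_compl_iff_disjoint_right.2 (disjoint_iff.2 hd)
  exact top_unique (hc.ge.trans (sup_le_sup_right h1 J))

theorem dIdeal_wellInside {J : RIdeal α} {c b : α} (hR : gis WellInside c b) (hbJ : b ∈ J) :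
    WellInside (dIdeal c) J := by
  obtain ⟨p, hcp, hpb⟩ := gis_interp hR
  obtain ⟨q, hpq, hqb⟩ := gis_interp hpb
  refine wellInside_of' (N := dIdeal cᶜ) ?_ ?_
  · rw [inf_eq_inter, bot_eq]
    refine le_antisymm (SetLike.le_def.2 fun x hx => ?_) (botIdeal_le _)
    have h1 : x ≤ cᶜ := R_le hx.1
    have h2 : x ≤ c := R_le hx.2
    exact (le_inf h1 h2).trans (by rw [inf_comm, inf_compl_self])
  · apply eq_top_of_top_mem
    have h1 : pᶜ ∈ dIdeal cᶜ := mem_dIdeal.2 (R_compl hcp)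
    have h2 : q ∈ J := J.down (R_le hqb) hbJ
    have h3 : WellInside p q := gis_sub hpq
    have := mem_sup_of_mems h1 h2
    rwa [show pᶜ ⊔ q = ⊤ from h3] at this

theorem isRegular : IsRegularFrame (RIdeal α) := by
  intro J
  apply le_antisymm
  · refine SetLike.le_def.2 fun x hx => ?_
    obtain ⟨c, hcJ, hRc⟩ := J.round hx
    obtain ⟨b, hbJ, hRcb⟩ := J.round hcJ
    have hW : WellInside (dIdeal c) J := dIdeal_wellInside hRcb hbJ
    exact SetLike.le_def.1 (le_sSup (show dIdeal c ∈ {K | WellInside K J} from hW))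
      (mem_dIdeal.2 hRc)
  · exact sSup_le fun K hK => wellInside_le hK

end RIdeal
end SRC

/-- Every strongly regular frame admits a compact regular compactification:
a dense surjective frame homomorphism from a compact regular frame. -/
theorem stronglyRegular_has_compactification
    {L : Type u} [Order.Frame L]
    (h : ∀ a : L, a = sSup {b | gis WellInside b a}) :
    ∃ (M : Type u) (_ : Order.Frame M), IsCompactFrame M ∧ IsRegularFrame M ∧
      ∃ k : FrameHom M L, (∀ a : M, k a = ⊥ → a = ⊥) ∧ Function.Surjective k := by
  refine ⟨SRC.RIdeal L, inferInstance, SRC.RIdeal.isCompact, SRC.RIdeal.isRegular, ?_⟩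
  refine ⟨⟨⟨⟨SRC.RIdeal.kFun, SRC.RIdeal.kFun_inf⟩, SRC.RIdeal.kFun_top⟩,
    SRC.RIdeal.kFun_sSup⟩, ?_, ?_⟩
  · intro J hJ
    rw [SRC.RIdeal.bot_eq]
    refine le_antisymm (SetLike.le_def.2 fun x hx => ?_) (SRC.RIdeal.botIdeal_le _)
    exact le_trans (le_sSup hx) (le_of_eq hJ)
  · intro a
    exact ⟨SRC.RIdeal.dIdeal a, by
      show sSup _ = a
      exact (h a).symm⟩
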